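/- Assume ∫_ℝ φ(t) dt = 1 and that φ satisfies the refinement relation φ(x) = ∑_{k=0}^{3N−1} p_k φ(2x − k) for almost every x, with real coefficients p_k satisfying ∑_{k=0}^{3N−1} p_k = 2. Then for every integer n ≥ 2, the value of the n-tuple integral at the right endpoint of the support satisfies φ^{∫n}(3N−1) = [1/(2^n − 2)] · ∑_{i=1}^{n−1} ∑_{k=0}^{3N−1} p_k · [(3N−1−k)^i / i!] · φ^{∫(n−i)}(3N−1). -/
import Mathlib


open MeasureTheory

/-- The `n`-tuple iterated integral `g^{∫n}(x) = ∫₀^x ∫₀^{ξ_n} ⋯ ∫₀^{ξ₂} g(ξ₁) dξ₁ ⋯ dξ_n`. -/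
noncomputable def iterInt (g : ℝ → ℝ) : ℕ → ℝ → ℝ
  | 0 => g
  | n + 1 => fun x => ∫ t in (0 : ℝ)..x, iterInt g n t

lemma iterInt_succ (g : ℝ → ℝ) (n : ℕ) (x : ℝ) :
    iterInt g (n + 1) x = ∫ t in (0 : ℝ)..x, iterInt g n t := rfl

lemma iterInt_one (g : ℝ → ℝ) (x : ℝ) :
    iterInt g 1 x = ∫ t in (0 : ℝ)..x, g t := rfl

lemma aux_ii {f : ℝ → ℝ} {B : ℝ} (hf : Measurable f) (hB : ∀ t, |f t| ≤ B) (a b : ℝ) :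
    IntervalIntegrable f volume a b := by
  refine (intervalIntegrable_const (c := B)).mono_fun
    hf.aestronglyMeasurable.restrict (Filter.Eventually.of_forall fun t => ?_)
  simpa [Real.norm_eq_abs] using (hB t).trans (le_abs_self B)

lemma iterInt_ii {φ : ℝ → ℝ} {B : ℝ} (hφmeas : Measurable φ) (hφbdd : ∀ t, |φ t| ≤ B) :
    ∀ n, ∀ a b : ℝ, IntervalIntegrable (iterInt φ n) volume a b := by
  intro n
  induction n with
  | zero => exact aux_ii hφmeas hφbdd
  | succ m ih =>
    intro a b
    exact (intervalIntegral.continuous_primitive ih 0).intervalIntegrable a b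

lemma iterInt_cont {φ : ℝ → ℝ} {B : ℝ} (hφmeas : Measurable φ) (hφbdd : ∀ t, |φ t| ≤ B)
    (n : ℕ) : Continuous (iterInt φ (n + 1)) :=
  intervalIntegral.continuous_primitive (iterInt_ii hφmeas hφbdd n) 0

/-- The iterated integrals vanish on `(-∞, 0]`. -/
lemma iterInt_nonpos {φ : ℝ → ℝ} {a : ℝ}
    (hsupp : ∀ t : ℝ, t ∉ Set.Icc (0 : ℝ) a → φ t = 0) :
    ∀ n, ∀ x : ℝ, x ≤ 0 → iterInt φ (n + 1) x = 0 := by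
  intro n
  induction n with
  | zero =>
    intro x hx
    rw [iterInt_succ]
    have h0 : ∀ᵐ t : ℝ ∂volume, t ≠ 0 := by
      rw [MeasureTheory.ae_iff]
      simp only [not_not, Set.setOf_eq_eq_singleton]
      exact measure_singleton (0 : ℝ)
    rw [show iterInt φ 0 = φ from rfl]
    rw [intervalIntegral.integral_congr_ae (g := fun _ => (0 : ℝ)) ?_]
    · simp
    · filter_upwards [h0] with t ht hmem
      rcases Set.mem_uIoc.1 hmem with h | h
      · linarith [h.1, h.2]
      · have ht0 : t < 0 := lt_of_le_of_ne h.2 ht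
        exact hsupp t (fun hc => absurd hc.1 (not_le.2 ht0))
  | succ m ih =>
    intro x hx
    rw [iterInt_succ]
    rw [intervalIntegral.integral_congr (g := fun _ => (0 : ℝ)) ?_]
    · simp
    · intro t ht
      have : t ∈ Set.Icc x 0 := by
        rwa [Set.uIcc_of_ge hx] at ht
      exact ih t this.2

/-- Change of variables for the primitive of an affinely rescaled function. -/
lemma integral_comp_two_mul_sub {f : ℝ → ℝ}
    (hf : ∀ a b : ℝ, IntervalIntegrable f volume a b) (c x : ℝ) :
    ∫ t in (0 : ℝ)..x, f (2 * t - c)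
      = 2⁻¹ * ((∫ s in (0 : ℝ)..(2 * x - c), f s) - ∫ s in (0 : ℝ)..(-c), f s) := by
  have h1 : (∫ t in (0 : ℝ)..x, f (2 * t - c))
      = (2 : ℝ)⁻¹ • ∫ s in (2 * 0 : ℝ)..(2 * x), f (s - c) :=
    intervalIntegral.integral_comp_mul_left (fun s => f (s - c)) two_ne_zero
  rw [h1, intervalIntegral.integral_comp_sub_right f c]
  have h2 : ((∫ s in (0 : ℝ)..(2 * x - c), f s) - ∫ s in (0 : ℝ)..(-c), f s)
      = ∫ s in (-c)..(2 * x - c), f s :=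
    intervalIntegral.integral_interval_sub_left (hf 0 (2 * x - c)) (hf 0 (-c))
  rw [h2]
  norm_num

/-- The self-similarity relation propagates to the iterated integrals. -/
lemma iterInt_refine {φ : ℝ → ℝ} {B : ℝ} {a : ℝ} (hφmeas : Measurable φ)
    (hφbdd : ∀ t, |φ t| ≤ B)
    (hsupp : ∀ t : ℝ, t ∉ Set.Icc (0 : ℝ) a → φ t = 0)
    (p : ℕ → ℝ) (M : ℕ)
    (href : ∀ᵐ x : ℝ ∂volume, φ x = ∑ k ∈ Finset.range M, p k * φ (2 * x - (k : ℝ))) :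
    ∀ n, ∀ x : ℝ, (2 : ℝ) ^ (n + 1) * iterInt φ (n + 1) x
      = ∑ k ∈ Finset.range M, p k * iterInt φ (n + 1) (2 * x - (k : ℝ)) := by
  have hii := iterInt_ii hφmeas hφbdd
  intro n
  induction n with
  | zero =>
    intro x
    have hint : ∀ k : ℕ, IntervalIntegrable (fun t => φ (2 * t - (k : ℝ))) volume 0 x := by
      intro k
      exact aux_ii (hφmeas.comp (by fun_prop)) (fun t => hφbdd _) 0 x
    have h1 : iterInt φ 1 x = ∫ t in (0 : ℝ)..x, ∑ k ∈ Finset.range M,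
        p k * φ (2 * t - (k : ℝ)) := by
      rw [iterInt_one]
      refine intervalIntegral.integral_congr_ae ?_
      filter_upwards [href] with t ht _
      exact ht
    rw [h1, intervalIntegral.integral_finset_sum
      (fun k _ => (hint k).const_mul (p k))]
    rw [Finset.mul_sum]
    refine Finset.sum_congr rfl fun k hk => ?_
    rw [intervalIntegral.integral_const_mul,
      integral_comp_two_mul_sub (aux_ii hφmeas hφbdd) (k : ℝ) x]
    have hz : (∫ s in (0 : ℝ)..(-(k : ℝ)), φ s) = 0 := by
      have := iterInt_nonpos hsupp 0 (-(k : ℝ)) (neg_nonpos.mpr (Nat.cast_nonneg k))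
      rwa [iterInt_one] at this
    rw [hz, iterInt_one]
    ring
  | succ m ih =>
    intro x
    have hcont := iterInt_cont hφmeas hφbdd m
    have heq : ∀ t : ℝ, iterInt φ (m + 1) t
        = ((2 : ℝ) ^ (m + 1))⁻¹ * ∑ k ∈ Finset.range M,
            p k * iterInt φ (m + 1) (2 * t - (k : ℝ)) := by
      intro t
      rw [← ih t]
      field_simp
    have h1 : iterInt φ (m + 2) x
        = ((2 : ℝ) ^ (m + 1))⁻¹ * ∑ k ∈ Finset.range M,
            p k * ∫ t in (0 : ℝ)..x, iterInt φ (m + 1) (2 * t - (k : ℝ)) := by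
      rw [iterInt_succ]
      rw [intervalIntegral.integral_congr (g := fun t => ((2 : ℝ) ^ (m + 1))⁻¹ *
        ∑ k ∈ Finset.range M, p k * iterInt φ (m + 1) (2 * t - (k : ℝ)))
        (fun t _ => heq t)]
      rw [intervalIntegral.integral_const_mul, intervalIntegral.integral_finset_sum]
      · congr 1
        exact Finset.sum_congr rfl fun k _ => intervalIntegral.integral_const_mul _ _
      · intro k _
        refine ((hcont.comp (f := fun t : ℝ => 2 * t - (k : ℝ))
          (by fun_prop)).intervalIntegrable 0 x).const_mul (p k)
    rw [h1, Finset.mul_sum, Finset.mul_sum]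
    refine Finset.sum_congr rfl fun k hk => ?_
    rw [integral_comp_two_mul_sub (hii (m + 1)) (k : ℝ) x]
    have hz : iterInt φ (m + 2) (-(k : ℝ)) = 0 :=
      iterInt_nonpos hsupp (m + 1) (-(k : ℝ)) (neg_nonpos.mpr (Nat.cast_nonneg k))
    rw [iterInt_succ] at hz ⊢
    rw [hz]
    have h2 : (2 : ℝ) ^ (m + 1) ≠ 0 := by positivity
    field_simp
    ring

/-- To the right of the support, the iterated integrals are Taylor polynomials. -/
lemma iterInt_poly {φ : ℝ → ℝ} {B : ℝ} {a : ℝ} (hφmeas : Measurable φ)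
    (hφbdd : ∀ t, |φ t| ≤ B)
    (hsupp : ∀ t : ℝ, t ∉ Set.Icc (0 : ℝ) a → φ t = 0) :
    ∀ m, ∀ x : ℝ, a ≤ x → iterInt φ (m + 1) x
      = ∑ j ∈ Finset.range (m + 1),
          iterInt φ (m + 1 - j) a * (x - a) ^ j / (j.factorial : ℝ) := by
  have hii := iterInt_ii hφmeas hφbdd
  intro m
  induction m with
  | zero =>
    intro x hx
    have hone : (∑ j ∈ Finset.range (0 + 1),
        iterInt φ (0 + 1 - j) a * (x - a) ^ j / (j.factorial : ℝ)) = iterInt φ 1 a := by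
      norm_num
    rw [hone]
    have hsplit : iterInt φ 1 x = iterInt φ 1 a + ∫ t in a..x, φ t := by
      rw [iterInt_succ, iterInt_succ]
      exact (intervalIntegral.integral_add_adjacent_intervals (hii 0 0 a) (hii 0 a x)).symm
    have hz : (∫ t in a..x, φ t) = 0 := by
      rw [intervalIntegral.integral_of_le hx]
      rw [MeasureTheory.setIntegral_congr_fun measurableSet_Ioc
        (g := fun _ => (0 : ℝ)) ?_]
      · simp
      · intro t ht
        exact hsupp t (fun hc => absurd hc.2 (not_le.2 ht.1))
    rw [hsplit, hz, add_zero]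
  | succ m ih =>
    intro x hx
    have hsplit : iterInt φ (m + 2) x = iterInt φ (m + 2) a
        + ∫ t in a..x, iterInt φ (m + 1) t := by
      rw [iterInt_succ, iterInt_succ]
      exact (intervalIntegral.integral_add_adjacent_intervals
        (hii (m + 1) 0 a) (hii (m + 1) a x)).symm
    have hcong : (∫ t in a..x, iterInt φ (m + 1) t)
        = ∫ t in a..x, ∑ j ∈ Finset.range (m + 1),
            iterInt φ (m + 1 - j) a * (t - a) ^ j / (j.factorial : ℝ) := by
      refine intervalIntegral.integral_congr fun t ht => ?_
      rw [Set.uIcc_of_le hx] at ht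
      exact ih t ht.1
    have hterm : ∀ j : ℕ, (∫ t in a..x, (t - a) ^ j)
        = (x - a) ^ (j + 1) / ((j : ℝ) + 1) := by
      intro j
      rw [intervalIntegral.integral_comp_sub_right (fun s => s ^ j) a, sub_self]
      rw [integral_pow]
      simp
    rw [hsplit, hcong, intervalIntegral.integral_finset_sum]
    · have hsum : ∀ j ∈ Finset.range (m + 1),
          (∫ t in a..x, iterInt φ (m + 1 - j) a * (t - a) ^ j / (j.factorial : ℝ))
            = iterInt φ (m + 2 - (j + 1)) a * (x - a) ^ (j + 1)
              / ((j + 1).factorial : ℝ) := by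
        intro j _
        have : (fun t => iterInt φ (m + 1 - j) a * (t - a) ^ j / (j.factorial : ℝ))
            = fun t => (iterInt φ (m + 1 - j) a / (j.factorial : ℝ)) * (t - a) ^ j := by
          funext t; ring
        rw [this, intervalIntegral.integral_const_mul, hterm j]
        have hMj : (m + 2 - (j + 1)) = (m + 1 - j) := by omega
        rw [hMj, Nat.factorial_succ]
        have hjf : (j.factorial : ℝ) ≠ 0 := Nat.cast_ne_zero.2 j.factorial_ne_zero
        have hj1 : ((j : ℝ) + 1) ≠ 0 := by positivity
        push_cast
        rw [div_mul_div_comm]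
        ring
      rw [Finset.sum_congr rfl hsum]
      rw [Finset.sum_range_succ' (fun j => iterInt φ (m + 2 - j) a * (x - a) ^ j
        / (j.factorial : ℝ)) (m + 1)]
      simp [add_comm]
    · intro j _
      exact Continuous.intervalIntegrable (by continuity) a x

theorem nTuple_integral_at_support_endpoint
    (N : ℕ) (hN : 2 ≤ N) (φ : ℝ → ℝ)
    (hφmeas : Measurable φ) (hφbdd : ∃ B, ∀ t, |φ t| ≤ B)
    (hφsupp : ∀ t : ℝ, t ∉ Set.Icc (0 : ℝ) (3 * N - 1) → φ t = 0)
    (hφint : ∫ t : ℝ, φ t = 1)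
    (p : ℕ → ℝ)
    (href : ∀ᵐ x : ℝ ∂volume, φ x = ∑ k ∈ Finset.range (3 * N), p k * φ (2 * x - (k : ℝ)))
    (hpsum : ∑ k ∈ Finset.range (3 * N), p k = 2)
    (n : ℕ) (hn : 2 ≤ n) :
    iterInt φ n (3 * (N : ℝ) - 1) =
      (1 / (2 ^ n - 2)) *
        ∑ i ∈ Finset.Icc 1 (n - 1), ∑ k ∈ Finset.range (3 * N),
          p k * (3 * (N : ℝ) - 1 - (k : ℝ)) ^ i / i.factorial *
            iterInt φ (n - i) (3 * (N : ℝ) - 1) := by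
  obtain ⟨B, hφbdd⟩ := hφbdd
  obtain ⟨m, rfl⟩ : ∃ m, n = m + 2 := ⟨n - 2, by omega⟩
  set a : ℝ := 3 * (N : ℝ) - 1 with ha
  have ha0 : (0 : ℝ) ≤ a := by
    have : (2 : ℝ) ≤ (N : ℝ) := by exact_mod_cast hN
    simp only [ha]; linarith
  -- self-similarity at x = a
  have hself := iterInt_refine hφmeas hφbdd hφsupp p (3 * N) href (m + 1) a
  -- for k in range (3N), 2a - k ≥ a
  have hka : ∀ k ∈ Finset.range (3 * N), a ≤ 2 * a - (k : ℝ) := by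
    intro k hk
    have hk' : k + 1 ≤ 3 * N := Finset.mem_range.1 hk
    have : (k : ℝ) ≤ 3 * (N : ℝ) - 1 := by
      have : ((k : ℝ) + 1) ≤ 3 * (N : ℝ) := by exact_mod_cast hk'
      push_cast at this ⊢
      linarith
    simp only [ha] at this ⊢
    linarith
  have hpoly := iterInt_poly hφmeas hφbdd hφsupp (m + 1)
  -- rewrite each iterInt at 2a - k via the Taylor polynomial
  have hstep : (2 : ℝ) ^ (m + 2) * iterInt φ (m + 2) a
      = ∑ k ∈ Finset.range (3 * N), p k * ∑ j ∈ Finset.range (m + 2),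
          iterInt φ (m + 2 - j) a * (a - (k : ℝ)) ^ j / (j.factorial : ℝ) := by
    rw [hself]
    refine Finset.sum_congr rfl fun k hk => ?_
    congr 1
    have := hpoly (2 * a - (k : ℝ)) (hka k hk)
    rw [this]
    refine Finset.sum_congr rfl fun j _ => ?_
    congr 2
    ring
  -- split off the j = 0 term
  have hins : Finset.range (m + 2) = insert 0 (Finset.Icc 1 (m + 1)) := by
    ext j
    simp [Finset.mem_range, Finset.mem_Icc, Finset.mem_insert]
    omega
  have hsplit : ∀ k : ℕ, (∑ j ∈ Finset.range (m + 2),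
        iterInt φ (m + 2 - j) a * (a - (k : ℝ)) ^ j / (j.factorial : ℝ))
      = iterInt φ (m + 2) a + ∑ j ∈ Finset.Icc 1 (m + 1),
          iterInt φ (m + 2 - j) a * (a - (k : ℝ)) ^ j / (j.factorial : ℝ) := by
    intro k
    rw [hins, Finset.sum_insert (by simp)]
    simp
  have hS : (2 : ℝ) ^ (m + 2) * iterInt φ (m + 2) a
      = 2 * iterInt φ (m + 2) a + ∑ k ∈ Finset.range (3 * N), p k *
          ∑ j ∈ Finset.Icc 1 (m + 1),
            iterInt φ (m + 2 - j) a * (a - (k : ℝ)) ^ j / (j.factorial : ℝ) := by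
    rw [hstep]
    rw [Finset.sum_congr rfl fun k _ => by rw [hsplit k]]
    rw [Finset.sum_congr rfl (fun k _ => mul_add (p k) _ _), Finset.sum_add_distrib,
      ← Finset.sum_mul, hpsum]
  -- identify the double sum with the statement's
  have hswap : (∑ k ∈ Finset.range (3 * N), p k * ∑ j ∈ Finset.Icc 1 (m + 1),
        iterInt φ (m + 2 - j) a * (a - (k : ℝ)) ^ j / (j.factorial : ℝ))
      = ∑ i ∈ Finset.Icc 1 (m + 2 - 1), ∑ k ∈ Finset.range (3 * N),
          p k * (a - (k : ℝ)) ^ i / (i.factorial : ℝ) * iterInt φ (m + 2 - i) a := by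
    have h1 : (m + 2 - 1) = m + 1 := by omega
    rw [h1]
    rw [Finset.sum_congr rfl fun k _ => Finset.mul_sum _ _ _]
    rw [Finset.sum_comm]
    refine Finset.sum_congr rfl fun j _ => Finset.sum_congr rfl fun k _ => ?_
    ring
  have hD : (2 : ℝ) ^ (m + 2) - 2 ≠ 0 := by
    have : (4 : ℝ) ≤ 2 ^ (m + 2) := by
      calc (4 : ℝ) = 2 ^ 2 := by norm_num
      _ ≤ 2 ^ (m + 2) := by
        apply pow_le_pow_right₀ (by norm_num) (by omega)
    linarith
  rw [← hswap]
  have : ((2 : ℝ) ^ (m + 2) - 2) * iterInt φ (m + 2) a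
      = ∑ k ∈ Finset.range (3 * N), p k * ∑ j ∈ Finset.Icc 1 (m + 1),
          iterInt φ (m + 2 - j) a * (a - (k : ℝ)) ^ j / (j.factorial : ℝ) := by
    linarith [hS]
  rw [← this]
  field_simp
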